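/- Consider a finite-horizon linear MDP as in the context, with features φ : S × A → ℝ^d. Then for every policy π : S × {1,…,H} → A and every stage h ∈ {1,…,H}, there exists a vector w_h ∈ ℝ^d with ‖w_h‖₂ ≤ 2H√d such that Q^π_h(s,a) = ⟨φ(s,a), w_h⟩ for all (s,a) ∈ S × A. -/

import Mathlib

open Matrix Finset

lemma sqrt_dot_eq_norm {d : ℕ} (v : Fin d → ℝ) :
    Real.sqrt (v ⬝ᵥ v) = ‖(WithLp.equiv 2 (Fin d → ℝ)).symm v‖ := by
  rw [EuclideanSpace.norm_eq]
  congr 1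
  simp [dotProduct, Real.norm_eq_abs, sq_abs, sq]

lemma sqrt_dot_triangle {d : ℕ} (u v : Fin d → ℝ) :
    Real.sqrt ((u + v) ⬝ᵥ (u + v)) ≤ Real.sqrt (u ⬝ᵥ u) + Real.sqrt (v ⬝ᵥ v) := by
  simp only [sqrt_dot_eq_norm, WithLp.equiv_symm_apply, WithLp.toLp_add]
  exact norm_add_le _ _

lemma dot_sum_smul {d : ℕ} {S : Type*} [Fintype S] (u : Fin d → ℝ) (c : S → ℝ)
    (θ : S → Fin d → ℝ) :
    u ⬝ᵥ (∑ s' : S, c s' • θ s') = ∑ s' : S, c s' * (u ⬝ᵥ θ s') := by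
  simp [dotProduct, Finset.mul_sum, Finset.sum_comm (γ := S)]
  congr 1; ext s'; congr 1; ext i; ring

/-- In a finite-horizon linear MDP, for every policy `π` and stage `h`, the
action-value function `Q^π_h` is linear in the features, with weight vector of
Euclidean norm at most `2H√d`. -/
theorem linear_mdp_Qpi_linear
    {S A : Type*} [Fintype S] [Nonempty S] [Fintype A] [Nonempty A]
    (d H : ℕ) (hd : 0 < d) (hH : 0 < H)
    (φ : S → A → Fin d → ℝ) (hφ : ∀ s a, Real.sqrt (φ s a ⬝ᵥ φ s a) ≤ 1)
    (μv : ℕ → Fin d → ℝ)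
    (hμ : ∀ h ∈ Finset.Icc 1 H, Real.sqrt (μv h ⬝ᵥ μv h) ≤ Real.sqrt d)
    (θ : ℕ → S → Fin d → ℝ)
    (r : ℕ → S → A → ℝ) (hr : ∀ h s a, r h s a = φ s a ⬝ᵥ μv h)
    (hr01 : ∀ h ∈ Finset.Icc 1 H, ∀ s a, r h s a ∈ Set.Icc (0 : ℝ) 1)
    (P : ℕ → S → A → S → ℝ) (hP : ∀ h s a s', P h s a s' = φ s a ⬝ᵥ θ h s')
    (hPnn : ∀ h ∈ Finset.Icc 1 H, ∀ s a s', 0 ≤ P h s a s')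
    (hPsum : ∀ h ∈ Finset.Icc 1 H, ∀ s a, ∑ s' : S, P h s a s' = 1)
    (hθ : ∀ h ∈ Finset.Icc 1 H, ∀ c : S → ℝ,
      Real.sqrt ((∑ s' : S, c s' • θ h s') ⬝ᵥ (∑ s' : S, c s' • θ h s'))
        ≤ Real.sqrt d * ⨆ s' : S, |c s'|)
    (π : S → ℕ → A)
    (Q : ℕ → S → A → ℝ) (V : ℕ → S → ℝ)
    (hVend : ∀ s, V (H + 1) s = 0)
    (hQ : ∀ h ∈ Finset.Icc 1 H, ∀ s a,
      Q h s a = r h s a + ∑ s' : S, P h s a s' * V (h + 1) s')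
    (hV : ∀ h ∈ Finset.Icc 1 H, ∀ s, V h s = Q h s (π s h)) :
    ∀ h ∈ Finset.Icc 1 H, ∃ w : Fin d → ℝ,
      Real.sqrt (w ⬝ᵥ w) ≤ 2 * H * Real.sqrt d ∧
      ∀ s a, Q h s a = φ s a ⬝ᵥ w := by
  -- value bound: |V h s| ≤ H + 1 - h
  have hVbd : ∀ k h : ℕ, h + k = H + 1 → 1 ≤ h → ∀ s, |V h s| ≤ (k : ℝ) := by
    intro k
    induction k with
    | zero =>
      intro h hk _ s
      have : h = H + 1 := by omega
      simp [this, hVend s]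
    | succ k ih =>
      intro h hk h1 s
      have hmem : h ∈ Finset.Icc 1 H := by
        simp only [Finset.mem_Icc]; omega
      have hVs : V h s = Q h s (π s h) := hV h hmem s
      have hQs := hQ h hmem s (π s h)
      have hrb := hr01 h hmem s (π s h)
      have hsum : ∑ s' : S, P h s (π s h) s' = 1 := hPsum h hmem s (π s h)
      have hbd : |∑ s' : S, P h s (π s h) s' * V (h + 1) s'| ≤ (k : ℝ) := by
        calc |∑ s' : S, P h s (π s h) s' * V (h + 1) s'|
            ≤ ∑ s' : S, |P h s (π s h) s' * V (h + 1) s'| := Finset.abs_sum_le_sum_abs _ _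
          _ ≤ ∑ s' : S, P h s (π s h) s' * (k : ℝ) := by
              apply Finset.sum_le_sum
              intro s' _
              rw [abs_mul, abs_of_nonneg (hPnn h hmem s (π s h) s')]
              exact mul_le_mul_of_nonneg_left
                (ih (h + 1) (by omega) (by omega) s') (hPnn h hmem s (π s h) s')
          _ = (k : ℝ) := by rw [← Finset.sum_mul, hsum, one_mul]
      have : |V h s| ≤ 1 + (k : ℝ) := by
        rw [hVs, hQs]
        calc |r h s (π s h) + ∑ s' : S, P h s (π s h) s' * V (h + 1) s'|
            ≤ |r h s (π s h)| + |∑ s' : S, P h s (π s h) s' * V (h + 1) s'| := abs_add_le _ _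
          _ ≤ 1 + (k : ℝ) := by
              have : |r h s (π s h)| ≤ 1 := abs_le.2 ⟨by linarith [hrb.1], hrb.2⟩
              linarith
      calc |V h s| ≤ 1 + (k : ℝ) := this
        _ = ((k + 1 : ℕ) : ℝ) := by push_cast; ring
  intro h hmem
  rw [Finset.mem_Icc] at hmem
  obtain ⟨h1, h2⟩ := hmem
  have hmem' : h ∈ Finset.Icc 1 H := Finset.mem_Icc.2 ⟨h1, h2⟩
  refine ⟨μv h + ∑ s' : S, V (h + 1) s' • θ h s', ?_, ?_⟩
  · -- norm bound
    have hsup : (⨆ s' : S, |V (h + 1) s'|) ≤ ((H - h : ℕ) : ℝ) := by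
      apply ciSup_le
      intro s'
      exact hVbd (H - h) (h + 1) (by omega) (by omega) s'
    have h2' := hθ h hmem' (fun s' => V (h + 1) s')
    have h3 : Real.sqrt ((∑ s' : S, V (h + 1) s' • θ h s') ⬝ᵥ
        (∑ s' : S, V (h + 1) s' • θ h s')) ≤ Real.sqrt d * ((H - h : ℕ) : ℝ) :=
      h2'.trans (mul_le_mul_of_nonneg_left hsup (Real.sqrt_nonneg _))
    calc Real.sqrt ((μv h + ∑ s' : S, V (h + 1) s' • θ h s') ⬝ᵥ
          (μv h + ∑ s' : S, V (h + 1) s' • θ h s'))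
        ≤ Real.sqrt (μv h ⬝ᵥ μv h) + Real.sqrt ((∑ s' : S, V (h + 1) s' • θ h s') ⬝ᵥ
            (∑ s' : S, V (h + 1) s' • θ h s')) := sqrt_dot_triangle _ _
      _ ≤ Real.sqrt d + Real.sqrt d * ((H - h : ℕ) : ℝ) := add_le_add (hμ h hmem') h3
      _ ≤ 2 * H * Real.sqrt d := by
          have : (1 : ℝ) + ((H - h : ℕ) : ℝ) ≤ 2 * H := by
            have : (H - h : ℕ) ≤ H := Nat.sub_le _ _
            have := Nat.cast_le (α := ℝ).2 this
            have hH1 : (1 : ℝ) ≤ (H : ℝ) := by exact_mod_cast hH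
            linarith
          nlinarith [Real.sqrt_nonneg (d : ℝ)]
  · intro s a
    rw [hQ h hmem' s a, hr, dotProduct_add, dot_sum_smul]
    congr 1
    apply Finset.sum_congr rfl
    intro s' _
    rw [hP]; ring
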